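/- Let k ≥ 4 be an even integer and j ≥ 0 an integer, and define Z : ℝ → ℂ by Z(s) = (iteratedDeriv j F)(s), where F : ℂ → ℂ is given by F(x) = ζ'(x)/ζ(x) − ζ'(k−x)/ζ(k−x) (with ζ the Riemann zeta function and ζ' its derivative). Then for every real s ∈ [k/2, k−2] the value Z(s) has zero imaginary part and nonnegative real part, Re Z(s) > 0 for k/2 < s ≤ k−2, and the function s ↦ Re Z(s) is strictly increasing on [k/2, k−2]. -/

import Mathlib

open Complex Set ArithmeticFunction LSeries
open scoped LSeries.notation

namespace ZetaAuxPaper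

noncomputable def rt (j : ℕ) (t : ℝ) (n : ℕ) : ℝ :=
  if n = 0 then 0 else (Real.log n) ^ j * vonMangoldt n * (n : ℝ) ^ (-t)

lemma logMul_iterate (j n : ℕ) :
    (logMul^[j] ↗vonMangoldt) n = (((Real.log n) ^ j * vonMangoldt n : ℝ) : ℂ) := by
  induction j with
  | zero => simp
  | succ j ih =>
    rw [Function.iterate_succ_apply', logMul, ih]
    push_cast
    rw [← Complex.natCast_log]
    push_cast
    ring

lemma habs : abscissaOfAbsConv ↗vonMangoldt ≤ 1 :=
  abscissaOfAbsConv_le_of_forall_lt_LSeriesSummable fun y hy =>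
    LSeriesSummable_vonMangoldt (by simpa using hy)

lemma LSeries_logpow_eq (j : ℕ) {t : ℝ} (ht : 1 < t) :
    Summable (rt j t) ∧
      LSeries (logMul^[j] ↗vonMangoldt) (t : ℂ) = ((∑' n, rt j t n : ℝ) : ℂ) := by
  have habs' : abscissaOfAbsConv (logMul^[j] ↗vonMangoldt) < (t : ℂ).re := by
    rw [absicssaOfAbsConv_logPowMul]
    refine lt_of_le_of_lt habs ?_
    simp only [ofReal_re]
    exact_mod_cast ht
  have hsum : LSeriesSummable (logMul^[j] ↗vonMangoldt) t :=
    LSeriesSummable_of_abscissaOfAbsConv_lt_re habs'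
  have hterm : ∀ n, term (logMul^[j] ↗vonMangoldt) (t : ℂ) n = ((rt j t n : ℝ) : ℂ) := by
    intro n
    rcases eq_or_ne n 0 with rfl | hn
    · simp [rt, term_zero]
    · rw [term_of_ne_zero hn, logMul_iterate, rt, if_neg hn,
        show ((n : ℂ)) ^ (t : ℂ) = (((n : ℝ) ^ t : ℝ) : ℂ) by
          rw [← Complex.ofReal_natCast, ← Complex.ofReal_cpow (Nat.cast_nonneg n)],
        Real.rpow_neg (Nat.cast_nonneg n), ← Complex.ofReal_div, div_eq_mul_inv]
  have hsummable : Summable (rt j t) := by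
    exact Complex.summable_ofReal.mp (Summable.congr hsum hterm)
  refine ⟨hsummable, ?_⟩
  rw [LSeries, Complex.ofReal_tsum]
  exact tsum_congr hterm

lemma bracket_mono {b kk s t : ℝ} (hb : 1 ≤ b) {e : ℝ} (he : e = 1 ∨ e = -1)
    (hs : kk / 2 ≤ s) (hst : s ≤ t) :
    b ^ (-(kk - s)) - e * b ^ (-s) ≤ b ^ (-(kk - t)) - e * b ^ (-t) := by
  have hb0 : (0 : ℝ) < b := lt_of_lt_of_le one_pos hb
  have e1 : b ^ (-(kk - t)) = b ^ t * b ^ (-kk) := by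
    rw [← Real.rpow_add hb0]; congr 1; ring
  have e2 : b ^ (-(kk - s)) = b ^ s * b ^ (-kk) := by
    rw [← Real.rpow_add hb0]; congr 1; ring
  have e3 : b ^ (-t) = b ^ s * b ^ (-s - t) := by
    rw [← Real.rpow_add hb0]; congr 1; ring
  have e4 : b ^ (-s) = b ^ t * b ^ (-s - t) := by
    rw [← Real.rpow_add hb0]; congr 1; ring
  have hf1 : b ^ s ≤ b ^ t := Real.rpow_le_rpow_of_exponent_le hb hst
  have hf2 : 0 ≤ b ^ (-kk) + e * b ^ (-s - t) := by
    rcases he with rfl | rfl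
    · have := Real.rpow_nonneg hb0.le (-kk)
      have := Real.rpow_nonneg hb0.le (-s - t)
      linarith
    · have : b ^ (-s - t) ≤ b ^ (-kk) :=
        Real.rpow_le_rpow_of_exponent_le hb (by linarith)
      linarith
  rw [e1, e2, e3, e4]
  nlinarith [mul_nonneg (sub_nonneg.mpr hf1) hf2]

lemma bracket_strict {b kk s t : ℝ} (hb : 1 < b) {e : ℝ} (he : e = 1 ∨ e = -1)
    (hs : kk / 2 ≤ s) (hst : s < t) :
    b ^ (-(kk - s)) - e * b ^ (-s) < b ^ (-(kk - t)) - e * b ^ (-t) := by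
  have hb0 : (0 : ℝ) < b := lt_trans one_pos hb
  have e1 : b ^ (-(kk - t)) = b ^ t * b ^ (-kk) := by
    rw [← Real.rpow_add hb0]; congr 1; ring
  have e2 : b ^ (-(kk - s)) = b ^ s * b ^ (-kk) := by
    rw [← Real.rpow_add hb0]; congr 1; ring
  have e3 : b ^ (-t) = b ^ s * b ^ (-s - t) := by
    rw [← Real.rpow_add hb0]; congr 1; ring
  have e4 : b ^ (-s) = b ^ t * b ^ (-s - t) := by
    rw [← Real.rpow_add hb0]; congr 1; ring
  have hf1 : b ^ s < b ^ t := Real.rpow_lt_rpow_of_exponent_lt hb hst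
  have hf2 : 0 < b ^ (-kk) + e * b ^ (-s - t) := by
    rcases he with rfl | rfl
    · have := Real.rpow_pos_of_pos hb0 (-kk)
      have := Real.rpow_pos_of_pos hb0 (-s - t)
      linarith
    · have : b ^ (-s - t) < b ^ (-kk) :=
        Real.rpow_lt_rpow_of_exponent_lt hb (by linarith)
      linarith
  rw [e1, e2, e3, e4]
  nlinarith [mul_pos (sub_pos.mpr hf1) hf2]

lemma bracket_nonneg {b kk s : ℝ} (hb : 1 ≤ b) {e : ℝ} (he : e = 1 ∨ e = -1)
    (hs : kk / 2 ≤ s) : 0 ≤ b ^ (-(kk - s)) - e * b ^ (-s) := by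
  have hb0 : (0 : ℝ) < b := lt_of_lt_of_le one_pos hb
  rcases he with rfl | rfl
  · have : b ^ (-s) ≤ b ^ (-(kk - s)) :=
      Real.rpow_le_rpow_of_exponent_le hb (by linarith)
    linarith
  · have h1 := Real.rpow_nonneg hb0.le (-(kk - s))
    have h2 := Real.rpow_nonneg hb0.le (-s)
    linarith

lemma bracket_pos {b kk s : ℝ} (hb : 1 < b) {e : ℝ} (he : e = 1 ∨ e = -1)
    (hs : kk / 2 < s) : 0 < b ^ (-(kk - s)) - e * b ^ (-s) := by
  have hb0 : (0 : ℝ) < b := lt_trans one_pos hb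
  rcases he with rfl | rfl
  · have : b ^ (-s) < b ^ (-(kk - s)) :=
      Real.rpow_lt_rpow_of_exponent_lt hb (by linarith)
    linarith
  · have h1 := Real.rpow_pos_of_pos hb0 (-(kk - s))
    have h2 := Real.rpow_pos_of_pos hb0 (-s)
    linarith

lemma g_nonneg (j n : ℕ) : 0 ≤ (Real.log n) ^ j * vonMangoldt n :=
  mul_nonneg (pow_nonneg (Real.log_natCast_nonneg n) j) vonMangoldt_nonneg

lemma g_two_pos (j : ℕ) : 0 < (Real.log (2 : ℕ)) ^ j * vonMangoldt 2 := by
  rw [vonMangoldt_apply_prime Nat.prime_two]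
  have h2 : ((2 : ℕ) : ℝ) = 2 := by norm_num
  rw [h2]
  have := Real.log_pos one_lt_two
  positivity

lemma neg_one_pow_cases (j : ℕ) : ((-1 : ℝ)) ^ j = 1 ∨ ((-1 : ℝ)) ^ j = -1 :=
  j.even_or_odd.imp (fun h => h.neg_one_pow) (fun h => h.neg_one_pow)

lemma Wterm_mono (j : ℕ) {kk s t : ℝ} (hs : kk / 2 ≤ s) (hst : s ≤ t) (n : ℕ) :
    rt j (kk - s) n - (-1 : ℝ) ^ j * rt j s n ≤ rt j (kk - t) n - (-1 : ℝ) ^ j * rt j t n := by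
  rcases eq_or_ne n 0 with rfl | hn
  · simp [rt]
  · have hb : (1 : ℝ) ≤ (n : ℝ) := by exact_mod_cast Nat.one_le_iff_ne_zero.mpr hn
    simp only [rt, if_neg hn]
    have h := bracket_mono hb (neg_one_pow_cases j) hs hst (b := (n : ℝ)) (kk := kk)
    nlinarith [mul_le_mul_of_nonneg_left h (g_nonneg j n)]

lemma Wterm_strict (j : ℕ) {kk s t : ℝ} (hs : kk / 2 ≤ s) (hst : s < t) :
    rt j (kk - s) 2 - (-1 : ℝ) ^ j * rt j s 2 < rt j (kk - t) 2 - (-1 : ℝ) ^ j * rt j t 2 := by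
  have hb : (1 : ℝ) < ((2 : ℕ) : ℝ) := by norm_num
  simp only [rt, if_neg (two_ne_zero)]
  have h := bracket_strict hb (neg_one_pow_cases j) hs hst (kk := kk)
  nlinarith [mul_lt_mul_of_pos_left h (g_two_pos j)]

lemma Wterm_nonneg (j : ℕ) {kk s : ℝ} (hs : kk / 2 ≤ s) (n : ℕ) :
    0 ≤ rt j (kk - s) n - (-1 : ℝ) ^ j * rt j s n := by
  rcases eq_or_ne n 0 with rfl | hn
  · simp [rt]
  · have hb : (1 : ℝ) ≤ (n : ℝ) := by exact_mod_cast Nat.one_le_iff_ne_zero.mpr hn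
    simp only [rt, if_neg hn]
    have h := bracket_nonneg hb (neg_one_pow_cases j) hs (b := (n : ℝ)) (kk := kk)
    nlinarith [mul_le_mul_of_nonneg_left h (g_nonneg j n)]

lemma Wterm_pos (j : ℕ) {kk s : ℝ} (hs : kk / 2 < s) :
    0 < rt j (kk - s) 2 - (-1 : ℝ) ^ j * rt j s 2 := by
  have hb : (1 : ℝ) < ((2 : ℕ) : ℝ) := by norm_num
  simp only [rt, if_neg (two_ne_zero)]
  have h := bracket_pos hb (neg_one_pow_cases j) hs (kk := kk)
  nlinarith [mul_lt_mul_of_pos_left h (g_two_pos j)]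

lemma zeta_iterated (k : ℕ) (hk4 : 4 ≤ k) (j : ℕ) {s : ℝ}
    (hs1 : (k : ℝ) / 2 ≤ s) (hs2 : s ≤ (k : ℝ) - 2) :
    iteratedDeriv j (fun x : ℂ => deriv riemannZeta x / riemannZeta x -
        deriv riemannZeta ((k : ℂ) - x) / riemannZeta ((k : ℂ) - x)) (s : ℂ) =
      LSeries (logMul^[j] ↗vonMangoldt) ((k : ℂ) - s) -
        (-1 : ℂ) ^ j * LSeries (logMul^[j] ↗vonMangoldt) (s : ℂ) := by
  have hk2 : (2 : ℝ) ≤ (k : ℝ) / 2 := by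
    have : (4 : ℝ) ≤ (k : ℝ) := by exact_mod_cast hk4
    linarith
  have hs2' : (2 : ℝ) ≤ s := le_trans hk2 hs1
  set U : Set ℂ := {x | 1 < x.re ∧ x.re < (k : ℝ) - 1} with hUdef
  have hU : IsOpen U := by
    have : U = re ⁻¹' (Ioo 1 ((k : ℝ) - 1)) := rfl
    rw [this]
    exact isOpen_Ioo.preimage continuous_re
  have hsub : U ⊆ {x : ℂ | abscissaOfAbsConv ↗vonMangoldt < x.re} := fun x hx =>
    lt_of_le_of_lt habs (by exact_mod_cast hx.1)
  have hmaps : ∀ x ∈ U, ((k : ℂ) - x) ∈ U := by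
    intro x hx
    simp only [hUdef, mem_setOf_eq, sub_re, natCast_re] at hx ⊢
    constructor <;> linarith [hx.1, hx.2]
  have hsU : (s : ℂ) ∈ U := by
    simp only [hUdef, mem_setOf_eq, ofReal_re]
    constructor <;> linarith
  set G1 : ℂ → ℂ := fun x => LSeries ↗vonMangoldt ((k : ℂ) - x) with hG1
  set G2 : ℂ → ℂ := LSeries ↗vonMangoldt with hG2
  have hEq : Set.EqOn (fun x : ℂ => deriv riemannZeta x / riemannZeta x -
      deriv riemannZeta ((k : ℂ) - x) / riemannZeta ((k : ℂ) - x)) (G1 - G2) U := by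
    intro x hx
    have h1 : 1 < x.re := hx.1
    have h2 : 1 < ((k : ℂ) - x).re := by
      simp only [sub_re, natCast_re]
      linarith [hx.2]
    have e1 := LSeries_vonMangoldt_eq_deriv_riemannZeta_div h1
    have e2 := LSeries_vonMangoldt_eq_deriv_riemannZeta_div h2
    simp only [Pi.sub_apply, hG1, hG2]
    rw [e1, e2]
    ring
  have hZG := hEq.iteratedDeriv_of_isOpen hU j hsU
  have hd2 : ContDiffOn ℂ j G2 U :=
    (((LSeries_differentiableOn ↗vonMangoldt).mono hsub)).contDiffOn hU
  have hd1 : ContDiffOn ℂ j G1 U := by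
    have hdiff : DifferentiableOn ℂ G1 U := by
      have h := (LSeries_differentiableOn ↗vonMangoldt).comp
        (((differentiable_const ((k : ℂ))).sub differentiable_id).differentiableOn)
        (fun x hx => hsub (hmaps x hx))
      exact h
    exact hdiff.contDiffOn hU
  have hopen_eq : ∀ (f : ℂ → ℂ) (x : ℂ), x ∈ U → iteratedDerivWithin j f U x = iteratedDeriv j f x := by
    intro f x hx
    rw [iteratedDerivWithin_eq_iteratedFDerivWithin, iteratedDeriv_eq_iteratedFDeriv,
      iteratedFDerivWithin_of_isOpen j hU hx]
  have hsplit : iteratedDeriv j (G1 - G2) (s : ℂ) =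
      iteratedDeriv j G1 (s : ℂ) - iteratedDeriv j G2 (s : ℂ) := by
    rw [← hopen_eq (G1 - G2) _ hsU, ← hopen_eq G1 _ hsU, ← hopen_eq G2 _ hsU,
      iteratedDerivWithin_sub hsU hU.uniqueDiffOn (hd1 _ hsU) (hd2 _ hsU)]
  have habs_s : abscissaOfAbsConv ↗vonMangoldt < (s : ℂ).re := hsub hsU
  have habs_ks : abscissaOfAbsConv ↗vonMangoldt < ((k : ℂ) - s).re := hsub (hmaps _ hsU)
  have hG2val : iteratedDeriv j G2 (s : ℂ) =
      (-1 : ℂ) ^ j * LSeries (logMul^[j] ↗vonMangoldt) (s : ℂ) :=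
    LSeries_iteratedDeriv j habs_s
  have hG1val : iteratedDeriv j G1 (s : ℂ) = LSeries (logMul^[j] ↗vonMangoldt) ((k : ℂ) - s) := by
    have hcomp : G1 = fun x : ℂ => (fun z : ℂ => LSeries ↗vonMangoldt ((k : ℂ) + z)) (-x) := by
      funext x
      simp only [hG1]
      rw [sub_eq_add_neg]
    rw [hcomp, iteratedDeriv_comp_neg j (fun z : ℂ => LSeries ↗vonMangoldt ((k : ℂ) + z)) (s : ℂ),
      iteratedDeriv_comp_const_add]
    beta_reduce
    rw [show (k : ℂ) + (-(s : ℂ)) = (k : ℂ) - s from by ring,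
      LSeries_iteratedDeriv j habs_ks, smul_eq_mul, ← mul_assoc, ← mul_pow]
    norm_num
  rw [hZG, hsplit, hG1val, hG2val]

end ZetaAuxPaper


open ZetaAuxPaper in
/-- For an even integer `k ≥ 4` and `j ≥ 0`, the function
`Z = iteratedDeriv j (x ↦ ζ'(x)/ζ(x) − ζ'(k−x)/ζ(k−x))` (the function `Z_{j+1}` of the paper)
is real valued and nonnegative on the real interval `[k/2, k−2]`, positive on `(k/2, k−2]`,
and its real part is strictly increasing on `[k/2, k−2]`. -/
theorem zetaLogDeriv_diff_iteratedDeriv_pos_and_strictMonoOn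
    (k : ℕ) (hk : Even k) (hk4 : 4 ≤ k) (j : ℕ)
    (Z : ℝ → ℂ)
    (hZ : Z = fun s : ℝ => iteratedDeriv j
      (fun x : ℂ => deriv riemannZeta x / riemannZeta x -
        deriv riemannZeta ((k : ℂ) - x) / riemannZeta ((k : ℂ) - x)) (s : ℂ)) :
    (∀ s : ℝ, s ∈ Set.Icc ((k : ℝ) / 2) ((k : ℝ) - 2) → (Z s).im = 0 ∧ 0 ≤ (Z s).re) ∧
      (∀ s : ℝ, (k : ℝ) / 2 < s → s ≤ (k : ℝ) - 2 → 0 < (Z s).re) ∧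
      StrictMonoOn (fun s : ℝ => (Z s).re) (Set.Icc ((k : ℝ) / 2) ((k : ℝ) - 2)) := by
  have key : ∀ s : ℝ, (k : ℝ) / 2 ≤ s → s ≤ (k : ℝ) - 2 →
      Summable (fun n => rt j ((k : ℝ) - s) n - (-1 : ℝ) ^ j * rt j s n) ∧
      Z s = ((∑' n, (rt j ((k : ℝ) - s) n - (-1 : ℝ) ^ j * rt j s n) : ℝ) : ℂ) := by
    intro s hs1 hs2
    have hk2 : (2 : ℝ) ≤ (k : ℝ) / 2 := by
      have : (4 : ℝ) ≤ (k : ℝ) := by exact_mod_cast hk4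
      linarith
    have ht1 : 1 < s := by linarith
    have ht2 : 1 < (k : ℝ) - s := by linarith
    obtain ⟨hsum1, hval1⟩ := LSeries_logpow_eq j ht2
    obtain ⟨hsum2, hval2⟩ := LSeries_logpow_eq j ht1
    have hsumW : Summable (fun n => rt j ((k : ℝ) - s) n - (-1 : ℝ) ^ j * rt j s n) :=
      hsum1.sub (hsum2.mul_left _)
    refine ⟨hsumW, ?_⟩
    simp only [hZ]
    rw [zeta_iterated k hk4 j hs1 hs2,
      show ((k : ℂ) - (s : ℂ)) = (((k : ℝ) - s : ℝ) : ℂ) by push_cast; ring,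
      hval1, hval2, Summable.tsum_sub hsum1 (hsum2.mul_left _), tsum_mul_left]
    push_cast
    ring
  refine ⟨?_, ?_, ?_⟩
  · intro s hs
    obtain ⟨hsum, hval⟩ := key s hs.1 hs.2
    rw [hval]
    exact ⟨ofReal_im _, by rw [ofReal_re]; exact tsum_nonneg (fun n => Wterm_nonneg j hs.1 n)⟩
  · intro s hs1 hs2
    obtain ⟨hsum, hval⟩ := key s hs1.le hs2
    rw [hval, ofReal_re]
    exact Summable.tsum_pos hsum (fun n => Wterm_nonneg j hs1.le n) 2 (Wterm_pos j hs1)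
  · intro a ha b hb hab
    obtain ⟨hsa, hva⟩ := key a ha.1 ha.2
    obtain ⟨hsb, hvb⟩ := key b hb.1 hb.2
    simp only [hva, hvb, ofReal_re]
    exact Summable.tsum_lt_tsum (fun n => Wterm_mono j ha.1 hab.le n) (Wterm_strict j ha.1 hab) hsa hsb
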